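/- Define the assignment: element i ∈ U goes to U1 if vertex v^{U,i}_2 is visited after v^{U,i}_3 on a Hamiltonian cycle, and to U2 otherwise. This assignment is a well-defined total function from U to {1, 2} for any Hamiltonian cycle of the converted graph, because in the converted graph every Hamiltonian cycle visits v^{U,i}_2 and v^{U,i}_3 consecutively (in one of the two orders), as v^{U,i}_2 and v^{U,i}_3 are connected by edges in both directions and v^{U,i}_1 has out-neighbors exactly {v^{U,i}_2, v^{U,i}_3}. -/
import Mathlib


/-- In the element component of the converted graph, v1's
out-neighbors are exactly {v2, v3}, and v2 and v3 have in-neighbors exactly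
{v1, each other}. Consequently every Hamiltonian cycle visits v2 and v3
consecutively in exactly one of the two orders, so the assignment of element i
to partition U1 or U2 (according to whether v2 is visited after v3 or not) is
a well-defined total function. -/
theorem stmt_19 {V : Type*} (E : V → V → Prop) (v1 v2 v3 : V)
    (h12 : v1 ≠ v2) (h13 : v1 ≠ v3) (h23 : v2 ≠ v3)
    (hout1 : ∀ w, E v1 w ↔ (w = v2 ∨ w = v3))
    (hin2 : ∀ w, E w v2 ↔ (w = v1 ∨ w = v3))
    (hin3 : ∀ w, E w v3 ↔ (w = v1 ∨ w = v2))
    (σ : Equiv.Perm V) (hE : ∀ x, E x (σ x))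
    (hcyc : ∀ x y : V, ∃ n : ℕ, (⇑σ)^[n] x = y) :
    Xor' (σ v3 = v2) (σ v2 = v3) := by
  -- not both
  have hnotboth : ¬ (σ v3 = v2 ∧ σ v2 = v3) := by
    rintro ⟨h32, h23'⟩
    have hstay : ∀ n : ℕ, (⇑σ)^[n] v2 = v2 ∨ (⇑σ)^[n] v2 = v3 := by
      intro n
      induction n with
      | zero => left; rfl
      | succ n ih =>
        rw [Function.iterate_succ_apply']
        rcases ih with h | h
        · right; rw [h, h23']
        · left; rw [h, h32]
    obtain ⟨n, hn⟩ := hcyc v2 v1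
    rcases hstay n with h | h
    · exact h12 (hn.symm.trans h)
    · exact h13 (hn.symm.trans h)
  -- at least one
  have hone : σ v3 = v2 ∨ σ v2 = v3 := by
    by_contra h
    push_neg at h
    obtain ⟨h1, h2⟩ := h
    have e2 : E (σ.symm v2) v2 := by
      have := hE (σ.symm v2); rwa [Equiv.apply_symm_apply] at this
    have e3 : E (σ.symm v3) v3 := by
      have := hE (σ.symm v3); rwa [Equiv.apply_symm_apply] at this
    rw [hin2] at e2
    rw [hin3] at e3
    have p2 : σ.symm v2 = v1 := by
      rcases e2 with h' | h'
      · exact h'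
      · exact absurd ((σ.symm_apply_eq).mp h').symm h1
    have p3 : σ.symm v3 = v1 := by
      rcases e3 with h' | h'
      · exact h'
      · exact absurd ((σ.symm_apply_eq).mp h').symm h2
    exact h23 (by rw [← Equiv.apply_symm_apply σ v2, ← Equiv.apply_symm_apply σ v3, p2, p3])
  rcases hone with h | h
  · exact Or.inl ⟨h, fun h' => hnotboth ⟨h, h'⟩⟩
  · exact Or.inr ⟨h, fun h' => hnotboth ⟨h', h⟩⟩
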